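/- The natural order 0 < 1 < ... < m−1 on Z_m (integers modulo m) is a respectful ordering: for nonzero x, y ∈ Z_m with (x) ⊋ (y), there exists a unit α with αx < uy for all units u (where comparison uses the natural representatives). -/
import Mathlib

/-- If `d ∣ m` and `z` is in the ideal generated by `(d : ZMod m)`,
then `d` divides `z.val`. -/
lemma dvd_val_of_mem_span (m d : ℕ) [NeZero m] (hdm : d ∣ m) (z : ZMod m)
    (hz : z ∈ Ideal.span {(d : ZMod m)}) : d ∣ z.val := by
  obtain ⟨c, hc⟩ := Ideal.mem_span_singleton'.mp hz
  have : z.val = (c.val * (d % m)) % m := by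
    rw [← hc, ZMod.val_mul, ZMod.val_natCast]
  rw [this, Nat.dvd_mod_iff hdm]
  exact Dvd.dvd.mul_left (Nat.dvd_mod_iff hdm |>.mpr dvd_rfl) _

/-- The natural order `0 < 1 < … < m-1` on `ℤ/mℤ` (comparing the natural
representatives via `ZMod.val`) is respectful: for nonzero `x, y` with `(x) ⊋ (y)`
there is a unit `α` with `αx < uy` for all units `u`. -/
theorem natural_order_on_zmod_respectful (m : ℕ) [NeZero m] (x y : ZMod m)
    (hx : x ≠ 0) (hy : y ≠ 0)
    (h : Ideal.span {y} < Ideal.span {x}) :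
    ∃ α : (ZMod m)ˣ, ∀ u : (ZMod m)ˣ,
      ((α : ZMod m) * x).val < ((u : ZMod m) * y).val := by
  obtain ⟨d, hdm, ux, hux, hxd⟩ := ZMod.eq_unit_mul_divisor x
  obtain ⟨e, hem, uy, huy, hye⟩ := ZMod.eq_unit_mul_divisor y
  have hm : m ≠ 0 := NeZero.ne m
  -- basic facts about d, e
  have hd0 : d ≠ 0 := fun h0 => by subst h0; simp at hxd; exact hx (hxd.trans (by simp))
  have he0 : e ≠ 0 := fun h0 => by subst h0; simp at hye; exact hy (hye.trans (by simp))
  have hdmne : d ≠ m := by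
    rintro rfl
    exact hx (by rw [hxd, ZMod.natCast_self, mul_zero])
  have hemne : e ≠ m := by
    rintro rfl
    exact hy (by rw [hye, ZMod.natCast_self, mul_zero])
  have hdlt : d < m := lt_of_le_of_ne (Nat.le_of_dvd (Nat.pos_of_ne_zero hm) hdm) hdmne
  have helt : e < m := lt_of_le_of_ne (Nat.le_of_dvd (Nat.pos_of_ne_zero hm) hem) hemne
  -- span {x} = span {(d : ZMod m)}, span {y} = span {(e : ZMod m)}
  have hspanx : Ideal.span {x} = Ideal.span {(d : ZMod m)} := by
    apply le_antisymm
    · rw [Ideal.span_singleton_le_span_singleton]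
      exact ⟨ux, by rw [hxd, mul_comm]⟩
    · rw [Ideal.span_singleton_le_span_singleton]
      exact ⟨((hux.unit⁻¹ : (ZMod m)ˣ) : ZMod m), by rw [hxd, mul_comm ux, mul_assoc, hux.mul_val_inv, mul_one]⟩
  have hspany : Ideal.span {y} = Ideal.span {(e : ZMod m)} := by
    apply le_antisymm
    · rw [Ideal.span_singleton_le_span_singleton]
      exact ⟨uy, by rw [hye, mul_comm]⟩
    · rw [Ideal.span_singleton_le_span_singleton]
      exact ⟨((huy.unit⁻¹ : (ZMod m)ˣ) : ZMod m), by rw [hye, mul_comm uy, mul_assoc, huy.mul_val_inv, mul_one]⟩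
  -- d ∣ e
  have hde : d ∣ e := by
    have : (e : ZMod m) ∈ Ideal.span {(d : ZMod m)} := by
      rw [← hspanx]
      exact h.le (hspany ▸ Ideal.mem_span_singleton_self _)
    have := dvd_val_of_mem_span m d hdm _ this
    rwa [ZMod.val_natCast, Nat.mod_eq_of_lt helt] at this
  have hdne : d ≠ e := by
    rintro rfl
    rw [hspanx, hspany] at h
    exact lt_irrefl _ h
  have hdlte : d < e := lt_of_le_of_ne (Nat.le_of_dvd (Nat.pos_of_ne_zero he0) hde) hdne
  -- take α = ux⁻¹
  refine ⟨hux.unit⁻¹, fun u => ?_⟩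
  have hαx : ((hux.unit⁻¹ : (ZMod m)ˣ) : ZMod m) * x = (d : ZMod m) := by
    rw [hxd, ← mul_assoc]
    simp
  rw [hαx, ZMod.val_natCast, Nat.mod_eq_of_lt hdlt]
  -- (u * y).val ≥ e > d
  have hmem : (u : ZMod m) * y ∈ Ideal.span {(e : ZMod m)} := by
    rw [← hspany]
    exact Ideal.mem_span_singleton'.mpr ⟨u, rfl⟩
  have hediv : e ∣ ((u : ZMod m) * y).val := dvd_val_of_mem_span m e hem _ hmem
  have hne : (u : ZMod m) * y ≠ 0 := by
    intro h0
    exact hy (by simpa using congrArg (fun z => ((u⁻¹ : (ZMod m)ˣ) : ZMod m) * z) h0)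
  have hval0 : ((u : ZMod m) * y).val ≠ 0 := fun h0 => hne (ZMod.val_eq_zero _ |>.mp h0)
  exact lt_of_lt_of_le hdlte (Nat.le_of_dvd (Nat.pos_of_ne_zero hval0) hediv)
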